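/- Let ψ(q) = #{(m,n): m ≥ n ≥ 0, C(m,n) odd, m + 2n = q}, γ₊ = (1+√5)/2, γ₋ = (1−√5)/2. Then for every positive integer q and nonnegative integer k, ψ(2^k q − 1) = [ (γ₊^{k+1} − γ₋^{k+1}) ψ(q−1) + (γ₊^k − γ₋^k) ψ(q−2) ] / (γ₊ − γ₋). -/

import Mathlib

/-- `ψ(q)`: number of `(m,n)` with `m ≥ n ≥ 0`, `C(m,n)` odd and `m + 2n = q`
(extended by `0` to negative `q`). -/
noncomputable def psi (q : ℤ) : ℕ :=
  {mn : ℕ × ℕ | mn.2 ≤ mn.1 ∧ (mn.1 : ℤ) + 2 * (mn.2 : ℤ) = q ∧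
    ¬ 2 ∣ Nat.choose mn.1 mn.2}.ncard

noncomputable def gammaP : ℝ := (1 + Real.sqrt 5) / 2
noncomputable def gammaM : ℝ := (1 - Real.sqrt 5) / 2

namespace PsiAux

def S (q : ℤ) : Set (ℕ × ℕ) :=
  {mn : ℕ × ℕ | mn.2 ≤ mn.1 ∧ (mn.1 : ℤ) + 2 * (mn.2 : ℤ) = q ∧
    ¬ 2 ∣ Nat.choose mn.1 mn.2}

lemma psi_eq (q : ℤ) : psi q = (S q).ncard := rfl

lemma S_finite (q : ℤ) : (S q).Finite := by
  apply Set.Finite.subset ((Set.finite_Iic q.toNat).prod (Set.finite_Iic q.toNat))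
  rintro ⟨m, n⟩ ⟨h1, h2, h3⟩
  simp only [Set.mem_prod, Set.mem_Iic]
  omega

lemma choose_key (m n r c : ℕ) (hr : r < 2) (hc : c < 2) :
    Nat.choose (2*m+r) (2*n+c) % 2 = (Nat.choose r c * Nat.choose m n) % 2 := by
  have : Fact (Nat.Prime 2) := ⟨Nat.prime_two⟩
  have h := Choose.choose_modEq_choose_mod_mul_choose_div_nat (n := 2*m+r) (k := 2*n+c) (p := 2)
  have h1 : (2*m+r) % 2 = r := by omega
  have h2 : (2*m+r) / 2 = m := by omega
  have h3 : (2*n+c) % 2 = c := by omega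
  have h4 : (2*n+c) / 2 = n := by omega
  rw [Nat.ModEq, h1, h2, h3, h4] at h
  exact h

lemma S_odd (q : ℤ) :
    S (2*q - 1) = (fun p : ℕ × ℕ => (2*p.1+1, 2*p.2)) '' S (q-1)
      ∪ (fun p : ℕ × ℕ => (2*p.1+1, 2*p.2+1)) '' S (q-2) := by
  ext ⟨m, n⟩
  simp only [S, Set.mem_setOf_eq, Set.mem_union, Set.mem_image, Prod.mk.injEq, Prod.exists]
  constructor
  · rintro ⟨h1, h2, h3⟩
    obtain ⟨a, ha⟩ : ∃ a, m = 2*a+1 := ⟨m/2, by omega⟩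
    rcases Nat.even_or_odd n with he | ho
    · obtain ⟨b, hb⟩ : ∃ b, n = 2*b := by
        rcases he with ⟨b, hb⟩; exact ⟨b, by omega⟩
      left
      have hkey := choose_key a b 1 0 (by omega) (by omega)
      simp only [Nat.choose_self, Nat.choose_zero_right, one_mul, Nat.add_zero] at hkey
      rw [ha, hb] at h3
      exact ⟨a, b, ⟨by omega, by push_cast; omega, by omega⟩, by omega, by omega⟩
    · obtain ⟨b, hb⟩ : ∃ b, n = 2*b+1 := by
        rcases ho with ⟨b, hb⟩; exact ⟨b, by omega⟩
      right
      have hkey := choose_key a b 1 1 (by omega) (by omega)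
      simp only [Nat.choose_self, one_mul] at hkey
      rw [ha, hb] at h3
      exact ⟨a, b, ⟨by omega, by push_cast; omega, by omega⟩, by omega, by omega⟩
  · rintro (⟨a, b, ⟨h1, h2, h3⟩, hm, hn⟩ | ⟨a, b, ⟨h1, h2, h3⟩, hm, hn⟩)
    · have hkey := choose_key a b 1 0 (by omega) (by omega)
      simp only [Nat.choose_self, Nat.choose_zero_right, one_mul, Nat.add_zero] at hkey
      subst hm hn
      exact ⟨by omega, by push_cast at h2 ⊢; omega, by omega⟩
    · have hkey := choose_key a b 1 1 (by omega) (by omega)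
      simp only [Nat.choose_self, one_mul] at hkey
      subst hm hn
      exact ⟨by omega, by push_cast at h2 ⊢; omega, by omega⟩

lemma S_even (q : ℤ) :
    S (2*q) = (fun p : ℕ × ℕ => (2*p.1, 2*p.2)) '' S q := by
  ext ⟨m, n⟩
  simp only [S, Set.mem_setOf_eq, Set.mem_image, Prod.mk.injEq, Prod.exists]
  constructor
  · rintro ⟨h1, h2, h3⟩
    obtain ⟨a, ha⟩ : ∃ a, m = 2*a := ⟨m/2, by omega⟩
    rcases Nat.even_or_odd n with he | ho
    · obtain ⟨b, hb⟩ : ∃ b, n = 2*b := by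
        rcases he with ⟨b, hb⟩; exact ⟨b, by omega⟩
      have hkey := choose_key a b 0 0 (by omega) (by omega)
      simp only [Nat.choose_self, Nat.choose_zero_right, one_mul, Nat.add_zero] at hkey
      rw [ha, hb] at h3
      exact ⟨a, b, ⟨by omega, by push_cast; omega, by omega⟩, by omega, by omega⟩
    · exfalso
      obtain ⟨b, hb⟩ : ∃ b, n = 2*b+1 := by
        rcases ho with ⟨b, hb⟩; exact ⟨b, by omega⟩
      have hkey := choose_key a b 0 1 (by omega) (by omega)
      simp only [Nat.choose_zero_succ, zero_mul, Nat.add_zero] at hkey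
      rw [ha, hb] at h3
      omega
  · rintro ⟨a, b, ⟨h1, h2, h3⟩, hm, hn⟩
    have hkey := choose_key a b 0 0 (by omega) (by omega)
    simp only [Nat.choose_self, Nat.choose_zero_right, one_mul, Nat.add_zero] at hkey
    subst hm hn
    exact ⟨by omega, by push_cast at h2 ⊢; omega, by omega⟩

lemma psi_odd (q : ℤ) : psi (2*q - 1) = psi (q-1) + psi (q-2) := by
  have inj0 : Function.Injective (fun p : ℕ × ℕ => (2*p.1+1, 2*p.2)) := by
    rintro ⟨a, b⟩ ⟨c, d⟩ h
    simp only [Prod.mk.injEq] at h ⊢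
    omega
  have inj1 : Function.Injective (fun p : ℕ × ℕ => (2*p.1+1, 2*p.2+1)) := by
    rintro ⟨a, b⟩ ⟨c, d⟩ h
    simp only [Prod.mk.injEq] at h ⊢
    omega
  have hdisj : Disjoint ((fun p : ℕ × ℕ => (2*p.1+1, 2*p.2)) '' S (q-1))
      ((fun p : ℕ × ℕ => (2*p.1+1, 2*p.2+1)) '' S (q-2)) := by
    rw [Set.disjoint_left]
    rintro ⟨m, n⟩ ⟨⟨a, b⟩, -, h1⟩ ⟨⟨c, d⟩, -, h2⟩
    simp only [Prod.mk.injEq] at h1 h2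
    omega
  rw [psi_eq, psi_eq, psi_eq, S_odd,
    Set.ncard_union_eq hdisj ((S_finite _).image _) ((S_finite _).image _),
    Set.ncard_image_of_injective _ inj0, Set.ncard_image_of_injective _ inj1]

lemma psi_even (q : ℤ) : psi (2*q) = psi q := by
  have inj0 : Function.Injective (fun p : ℕ × ℕ => (2*p.1, 2*p.2)) := by
    rintro ⟨a, b⟩ ⟨c, d⟩ h
    simp only [Prod.mk.injEq] at h ⊢
    omega
  rw [psi_eq, psi_eq, S_even, Set.ncard_image_of_injective _ inj0]

lemma main (q : ℤ) : ∀ k : ℕ,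
    psi (2^k * q - 1) = Nat.fib (k+1) * psi (q-1) + Nat.fib k * psi (q-2) := by
  intro k
  induction k using Nat.twoStepInduction with
  | zero => simp
  | one =>
    rw [show (2:ℤ)^1 * q - 1 = 2*q - 1 by ring, psi_odd]
    simp [Nat.fib]
  | more k ih1 ih2 =>
    rw [show (2:ℤ)^(k+2) * q - 1 = 2*(2^(k+1)*q) - 1 by ring, psi_odd,
      show (2:ℤ)^(k+1)*q - 2 = 2*(2^k*q - 1) by ring, psi_even, ih1, ih2]
    have e : k+2+1 = k+1+2 := by omega
    rw [e, Nat.fib_add_two (n := k+1), Nat.fib_add_two (n := k)]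
    ring

end PsiAux

theorem psi_closed_form (q : ℕ) (hq : 0 < q) (k : ℕ) :
    (psi ((2 : ℤ) ^ k * q - 1) : ℝ) =
      ((gammaP ^ (k + 1) - gammaM ^ (k + 1)) * (psi ((q : ℤ) - 1) : ℝ)
        + (gammaP ^ k - gammaM ^ k) * (psi ((q : ℤ) - 2) : ℝ)) / (gammaP - gammaM) := by
  rw [PsiAux.main (q : ℤ) k]
  have e1 : gammaP = Real.goldenRatio := rfl
  have e2 : gammaM = Real.goldenConj := rfl
  have h5 : (0:ℝ) < Real.sqrt 5 := Real.sqrt_pos.mpr (by norm_num)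
  have hsub : Real.goldenRatio - Real.goldenConj = Real.sqrt 5 := Real.goldenRatio_sub_goldenConj
  push_cast
  rw [e1, e2, hsub, Real.coe_fib_eq, Real.coe_fib_eq, eq_div_iff (ne_of_gt h5)]
  field_simp
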